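/- Let π ∈ ℝ^n and let I ⊆ {1,…,n} be such that {1} ∪ {π_i : i ∈ I} is a basis of the ℚ-span of {1, π_1, …, π_n}, with π_j = q_{j,0} + Σ_{i∈I} q_{j,i} π_i for rational q_{j,i} and all j ∉ I. Then V_π = {x ∈ ℝ^n : x_j = Σ_{i∈I} q_{j,i} x_i for all j ∉ I}. -/

import Mathlib

/-- If `{1} ∪ {π_i : i ∈ I}` is a ℚ-basis of the ℚ-span of `{1, π_1, …, π_n}`,
with `π_j = q_{j,0} + ∑_{i∈I} q_{j,i} π_i` for `j ∉ I`, then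
`V_π = {x : x_j = ∑_{i∈I} q_{j,i} x_i for all j ∉ I}`. -/
theorem V_pi_basis_characterization (n : ℕ) (π : Fin n → ℝ) (I : Finset (Fin n))
    (q0 : Fin n → ℚ) (q : Fin n → Fin n → ℚ)
    (hindep : ∀ (c0 : ℚ) (c : Fin n → ℚ),
      ((c0 : ℝ) + ∑ i ∈ I, (c i : ℝ) * π i = 0) → c0 = 0 ∧ ∀ i ∈ I, c i = 0)
    (hrep : ∀ j ∉ I, π j = (q0 j : ℝ) + ∑ i ∈ I, (q j i : ℝ) * π i) :
    {x : Fin n → ℝ | ∀ α : Fin n → ℚ,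
        (∃ p : ℚ, ∑ j, (α j : ℝ) * π j = (p : ℝ)) →
        ∑ j, (α j : ℝ) * x j = 0}
      = {x : Fin n → ℝ | ∀ j ∉ I, x j = ∑ i ∈ I, (q j i : ℝ) * x i} := by
  ext x
  simp only [Set.mem_setOf_eq]
  constructor
  · intro hx j hj
    set α : Fin n → ℚ := fun k => if k = j then 1 else if k ∈ I then -q j k else 0 with hα
    have key : ∀ g : Fin n → ℝ,
        ∑ k, (α k : ℝ) * g k = g j - ∑ i ∈ I, (q j i : ℝ) * g i := by
      intro g
      rw [← Finset.sum_add_sum_compl I]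
      have h1 : ∑ k ∈ I, (α k : ℝ) * g k = -∑ i ∈ I, (q j i : ℝ) * g i := by
        rw [← Finset.sum_neg_distrib]
        refine Finset.sum_congr rfl fun k hk => ?_
        have hkj : k ≠ j := fun h => hj (h ▸ hk)
        simp [hα, hkj, hk]
      have h2 : ∑ k ∈ Iᶜ, (α k : ℝ) * g k = g j := by
        rw [Finset.sum_eq_single j]
        · simp [hα]
        · intro k hk hkj
          simp [hα, hkj, Finset.mem_compl.mp hk]
        · intro h
          exact absurd (Finset.mem_compl.mpr hj) h
      rw [h1, h2]; ring
    have h := hx α ⟨q0 j, by rw [key, hrep j hj]; ring⟩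
    rw [key] at h
    linarith
  · rintro hx α ⟨p, hp⟩
    rw [← Finset.sum_add_sum_compl I] at hp
    have hp' : ∑ j ∈ I, (α j : ℝ) * π j
        + ∑ j ∈ Iᶜ, (α j : ℝ) * ((q0 j : ℝ) + ∑ i ∈ I, (q j i : ℝ) * π i) = p := by
      rw [← hp]
      congr 1
      exact Finset.sum_congr rfl fun j hj => by
        rw [hrep j (Finset.mem_compl.mp hj)]
    set c : Fin n → ℚ := fun i => α i + ∑ j ∈ Iᶜ, α j * q j i with hc
    set c0 : ℚ := (∑ j ∈ Iᶜ, α j * q0 j) - p with hc0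
    have comm : ∀ g : Fin n → ℝ,
        ∑ j ∈ Iᶜ, (α j : ℝ) * ∑ i ∈ I, (q j i : ℝ) * g i
          = ∑ i ∈ I, (∑ j ∈ Iᶜ, (α j : ℝ) * (q j i : ℝ)) * g i := by
      intro g
      simp only [Finset.mul_sum, Finset.sum_mul]
      rw [Finset.sum_comm]
      apply Finset.sum_congr rfl fun i _ => Finset.sum_congr rfl fun j _ => by ring
    have heq : (c0 : ℝ) + ∑ i ∈ I, (c i : ℝ) * π i = 0 := by
      have expand : ∑ i ∈ I, (c i : ℝ) * π i
          = ∑ i ∈ I, (α i : ℝ) * π i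
            + ∑ j ∈ Iᶜ, (α j : ℝ) * ∑ i ∈ I, (q j i : ℝ) * π i := by
        rw [comm, ← Finset.sum_add_distrib]
        apply Finset.sum_congr rfl fun i _ => ?_
        push_cast [hc]
        ring
      rw [expand]
      push_cast [hc0]
      simp only [mul_add, Finset.sum_add_distrib] at hp'
      linarith
    have hczero := (hindep c0 c heq).2
    rw [← Finset.sum_add_sum_compl I]
    have h2 : ∑ j ∈ Iᶜ, (α j : ℝ) * x j
        = ∑ i ∈ I, (∑ j ∈ Iᶜ, (α j : ℝ) * (q j i : ℝ)) * x i := by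
      rw [← comm]
      exact Finset.sum_congr rfl fun j hj => by
        rw [hx j (Finset.mem_compl.mp hj)]
    rw [h2, ← Finset.sum_add_distrib]
    apply Finset.sum_eq_zero
    intro i hi
    have := hczero i hi
    have : (c i : ℝ) = 0 := by exact_mod_cast congrArg (fun t : ℚ => (t : ℝ)) this
    rw [hc] at this
    push_cast at this
    rw [← add_mul]
    rw [this]
    ring
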